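/- Let A be a real n×n matrix, B a real n×m matrix, X a real n×N matrix, U a real m×N matrix, and set Ẋ := A·X + B·U. Let Z be the (n+m)×N matrix obtained by stacking X on top of U, and suppose Z admits a right inverse Z⁺ (an N×(n+m) real matrix with Z·Z⁺ = I_{n+m}). Then the n×(n+m) block matrix [A B] (A in the first n columns, B in the last m columns) equals Ẋ·Z⁺. -/

import Mathlib

open Matrix

theorem data_based_representation {n m N : ℕ}
    (A : Matrix (Fin n) (Fin n) ℝ) (B : Matrix (Fin n) (Fin m) ℝ)
    (X : Matrix (Fin n) (Fin N) ℝ) (U : Matrix (Fin m) (Fin N) ℝ)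
    (Zp : Matrix (Fin N) (Fin n ⊕ Fin m) ℝ)
    (hZ : Matrix.fromRows X U * Zp = 1) :
    Matrix.fromCols A B = (A * X + B * U) * Zp := by
  rw [← Matrix.fromCols_mul_fromRows, Matrix.mul_assoc, hZ, Matrix.mul_one]
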